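/- arXiv:1006.1073 — 2 statements merged into one kernel-verified Lean document; each statement's English description precedes it below -/
import Mathlib

section
/- Let (Y_n)_{n≥1} be a sequence of independent integrable real-valued random variables, μ ∈ ℝ, and S_k = Y_1 + ⋯ + Y_k. Suppose (d_n) is a sequence of positive numbers such that there exist constants c > 0, γ > 0 and n₀ ≥ 1 with d_l/d_k ≥ c·(l/k)^γ for all l ≥ k ≥ n₀, and there exist constants C₀ > 0, γ' ∈ (0, γ) and ε ∈ (0,1) with E| (S_n − μn)/d_n | ≤ C₀·exp(γ'(log n)^{1−ε}) for all n ≥ 1. Then there is a constant C > 0 such that for all n ≥ 1, E[ (1/d_n)·max_{1≤k≤n} | Σ_{j=1}^k log((n+1)/j)·(Y_j − μ) | ] ≤ C·log n·exp(γ'(log n)^{1−ε}). -/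
open MeasureTheory ProbabilityTheory Filter
open scoped ENNReal NNReal

/-- `clog x = ln (max x e)`. -/

noncomputable def clog (x : ℝ) : ℝ := Real.log (max x (Real.exp 1))

lemma one_le_clog (x : ℝ) : 1 ≤ clog x := by
  unfold clog
  calc (1:ℝ) = Real.log (Real.exp 1) := (Real.log_exp 1).symm
  _ ≤ _ := Real.log_le_log (Real.exp_pos 1) (le_max_right _ _)

lemma clog_mono {x y : ℝ} (h : x ≤ y) : clog x ≤ clog y :=
  Real.log_le_log (lt_of_lt_of_le (Real.exp_pos 1) (le_max_right _ _))
    (max_le_max h le_rfl)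

lemma clog_nat_succ_le (n : ℕ) (hn : 1 ≤ n) : clog ((n:ℝ)+1) ≤ 2 * clog n := by
  have he : (2.7182818283 : ℝ) < Real.exp 1 := Real.exp_one_gt_d9
  have he2 : Real.exp 1 < 2.7182818286 := Real.exp_one_lt_d9
  have h2 : clog ((n:ℝ)+1) ≤ Real.log ((max (n:ℝ) (Real.exp 1))^2) := by
    unfold clog
    apply Real.log_le_log (lt_of_lt_of_le (Real.exp_pos 1) (le_max_right _ _))
    rcases le_or_gt (3:ℕ) n with h3 | h3
    · have h3' : (3:ℝ) ≤ (n:ℝ) := by exact_mod_cast h3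
      have : max (n:ℝ) (Real.exp 1) = (n:ℝ) := max_eq_left (by nlinarith)
      rw [this]
      refine max_le (by nlinarith) (by nlinarith)
    · have h3' : (n:ℝ) ≤ 2 := by
        have : n ≤ 2 := by omega
        exact_mod_cast this
      have hmx : (n:ℝ) ≤ Real.exp 1 := by nlinarith
      have hmax : max (n:ℝ) (Real.exp 1) = Real.exp 1 := max_eq_right (by nlinarith)
      rw [hmax]
      refine max_le (by nlinarith) (by nlinarith)
    
  calc clog ((n:ℝ)+1) ≤ Real.log ((max (n:ℝ) (Real.exp 1))^2) := h2
  _ = 2 * clog n := by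
      rw [Real.log_pow]; push_cast; ring_nf; rfl



lemma aux_measA {Ω : Type*} [MeasurableSpace Ω] (W : ℕ → Ω → ℝ) (k : ℕ) (t : ℝ)
    (hW : ∀ j, j ≤ k → Measurable (W j)) :
    MeasurableSet {ω | t < |W k ω| ∧ ∀ j, j < k → |W j ω| ≤ t} := by
  have : {ω | t < |W k ω| ∧ ∀ j, j < k → |W j ω| ≤ t}
      = {ω | t < |W k ω|} ∩ ⋂ j ∈ Finset.range k, {ω | |W j ω| ≤ t} := by
    ext ω; simp [Set.mem_iInter, Finset.mem_range]
  rw [this]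
  exact (measurableSet_lt measurable_const (hW k le_rfl).abs).inter
    (Finset.measurableSet_biInter _ fun j hj =>
      measurableSet_le ((hW j (le_of_lt (Finset.mem_range.1 hj))).abs) measurable_const)

lemma ofReal_half : ENNReal.ofReal (1/2) = 1/2 := by
  rw [ENNReal.ofReal_div_of_pos (by norm_num), ENNReal.ofReal_one, ENNReal.ofReal_ofNat]

lemma toReal_half : ((1/2 : ℝ≥0∞)).toReal = 1/2 := by
  rw [← ofReal_half, ENNReal.toReal_ofReal] <;> norm_num

lemma aux_measD {Ω : Type*} [MeasurableSpace Ω] (V : Ω → ℝ) (s : ℝ) (hV : Measurable V) :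
    MeasurableSet {ω | s < |V ω|} :=
  measurableSet_lt measurable_const hV.abs

set_option maxHeartbeats 1000000 in
lemma ottaviani_tail
    {Ω : Type*} [MeasurableSpace Ω] (P : Measure Ω) [IsProbabilityMeasure P]
    (Z : ℕ → Ω → ℝ) (hZm : ∀ i, Measurable (Z i))
    (hZi : ∀ i, Integrable (Z i) P)
    (hind : iIndepFun Z P)
    (n : ℕ) (B t : ℝ) (hB : 0 < B)
    (hBk : ∀ k, k ≤ n →
      ∫ ω, |∑ j ∈ Finset.Icc 1 n, Z j ω - ∑ j ∈ Finset.Icc 1 k, Z j ω| ∂P ≤ B)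
    (ht : 4 * B ≤ t) :
    P {ω | ∃ k, 1 ≤ k ∧ k ≤ n ∧ t < |∑ j ∈ Finset.Icc 1 k, Z j ω|}
      ≤ 2 * P {ω | t < 2 * |∑ j ∈ Finset.Icc 1 n, Z j ω|} := by
  classical
  set W : ℕ → Ω → ℝ := fun k ω => ∑ j ∈ Finset.Icc 1 k, Z j ω with hWdef
  have hWm : ∀ k, Measurable (W k) := fun k => Finset.measurable_sum _ (fun i _ => hZm i)
  have hWi : ∀ k, Integrable (W k) P := fun k => integrable_finset_sum _ (fun i _ => hZi i)
  have ht0 : 0 < t := lt_of_lt_of_le (by linarith) ht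
  set E : Set Ω := {ω | t < 2 * |W n ω|} with hEdef
  have hEmeas : MeasurableSet E :=
    measurableSet_lt measurable_const ((hWm n).abs.const_mul 2)
  set A : ℕ → Set Ω := fun k => {ω | t < |W k ω| ∧ ∀ j, j < k → |W j ω| ≤ t} with hAdef
  have hAeq : ∀ k, A k = {ω | t < |W k ω|} ∩ ⋂ j ∈ Finset.range k, {ω | |W j ω| ≤ t} := by
    intro k
    ext ω
    simp [hAdef, Set.mem_iInter, Finset.mem_range]
  have hAmeas : ∀ k, MeasurableSet (A k) := by
    intro k
    rw [hAeq k]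
    exact (measurableSet_lt measurable_const (hWm k).abs).inter
      (Finset.measurableSet_biInter _ fun j _ =>
        measurableSet_le (hWm j).abs measurable_const)
  -- covering
  have hcover : {ω | ∃ k, 1 ≤ k ∧ k ≤ n ∧ t < |W k ω|} ⊆ ⋃ k ∈ Finset.Icc 1 n, A k := by
    rintro ω ⟨k₀, hk1, hk2, hk3⟩
    have hex : ∃ k, t < |W k ω| := ⟨k₀, hk3⟩
    set k := Nat.find hex with hk
    have hkspec : t < |W k ω| := Nat.find_spec hex
    have hkmin : ∀ j, j < k → |W j ω| ≤ t := fun j hj => not_lt.1 (Nat.find_min hex hj)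
    have hkle : k ≤ k₀ := Nat.find_min' hex hk3
    have hk1' : 1 ≤ k := by
      rcases Nat.eq_zero_or_pos k with h0 | h
      · exfalso
        have hW0 : W 0 ω = 0 := by simp [hWdef]
        rw [h0, hW0] at hkspec
        simp at hkspec; linarith
      · exact h
    exact Set.mem_biUnion (Finset.mem_Icc.2 ⟨hk1', le_trans hkle hk2⟩)
      (⟨hkspec, hkmin⟩ : ω ∈ A k)
  -- pairwise disjoint
  have hdisj0 : ∀ k l, k < l → Disjoint (A k) (A l) := by
    intro k l h
    refine Set.disjoint_left.2 fun ω hωk hωl => ?_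
    exact absurd hωk.1 (not_lt.2 (hωl.2 k h))
  have hdisj : Set.PairwiseDisjoint ↑(Finset.Icc 1 n) A := by
    intro k _ l _ hkl
    rcases lt_or_gt_of_ne hkl with h | h
    · exact hdisj0 k l h
    · exact (hdisj0 l k h).symm
  -- key per-k bound
  have hkey : ∀ k ∈ Finset.Icc 1 n, P (A k) ≤ 2 * P (A k ∩ E) := by
    intro k hk
    rw [Finset.mem_Icc] at hk
    let V : Ω → ℝ := fun ω => ∑ j ∈ Finset.Ioc k n, Z j ω
    have hVsum : ∀ ω, W n ω - W k ω = V ω := by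
      intro ω
      have h1 : ∀ m : ℕ, W m ω = ∑ j ∈ Finset.Ioc 0 m, Z j ω := by
        intro m; simp [hWdef, ← Finset.Icc_add_one_left_eq_Ioc]
      have h2 := Finset.sum_Ioc_consecutive (fun j => Z j ω) (Nat.zero_le k) hk.2
      simp only [h1]
      linarith [h2]
    set D : Set Ω := {ω | t/2 < |V ω|} with hDdef
    have hVm : Measurable V := Finset.measurable_sum _ (fun i _ => hZm i)
    have hVi : Integrable V P := integrable_finset_sum _ (fun i _ => hZi i)
    have hDmeas : MeasurableSet D := aux_measD V (t/2) hVm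
    -- independence, scoped so local σ-algebra instances don't leak
    have hmul : P (A k ∩ D) = P (A k) * P D := by
      let mc : ℕ → MeasurableSpace Ω := fun i => MeasurableSpace.comap (Z i) inferInstance
      let m₁ : MeasurableSpace Ω := ⨆ i ∈ Set.Iic k, mc i
      let m₂ : MeasurableSpace Ω := ⨆ i ∈ Set.Ioi k, mc i
      have hle : ∀ i, mc i ≤ _ := fun i => (hZm i).comap_le
      have hindep : Indep m₁ m₂ P :=
        indep_iSup_of_disjoint hle hind.iIndep (Set.Iic_disjoint_Ioi le_rfl)
      have hZm₁ : ∀ i, i ≤ k → Measurable[m₁] (Z i) := by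
        intro i hi
        have h1 : mc i ≤ m₁ := le_biSup _ (Set.mem_Iic.2 hi)
        exact measurable_iff_comap_le.2 h1
      have hZm₂ : ∀ i, k < i → Measurable[m₂] (Z i) := by
        intro i hi
        have h1 : mc i ≤ m₂ := le_biSup _ (Set.mem_Ioi.2 hi)
        exact measurable_iff_comap_le.2 h1
      have hWm₁ : ∀ j, j ≤ k → Measurable[m₁] (W j) := by
        intro j hj
        exact Finset.measurable_sum _ (fun i hi =>
          hZm₁ i (le_trans (Finset.mem_Icc.1 hi).2 hj))
      have hA₁ : MeasurableSet[m₁] (A k) := @aux_measA Ω m₁ W k t hWm₁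
      have hVm₂ : Measurable[m₂] V :=
        Finset.measurable_sum _ (fun i hi => hZm₂ i (Finset.mem_Ioc.1 hi).1)
      have hD₂ : MeasurableSet[m₂] D := @aux_measD Ω m₂ V (t/2) hVm₂
      exact (Indep_iff m₁ m₂ P).1 hindep _ _ hA₁ hD₂
    -- Markov: P D ≤ 1/2
    have hPD : P D ≤ 1/2 := by
      have hε0 : (ENNReal.ofReal (t/2)) ≠ 0 := by
        simp only [ne_eq, ENNReal.ofReal_eq_zero, not_le]; linarith
      have hεtop : (ENNReal.ofReal (t/2)) ≠ ⊤ := ENNReal.ofReal_ne_top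
      have hsub : D ⊆ {ω | ENNReal.ofReal (t/2) ≤ ENNReal.ofReal |V ω|} :=
        fun ω hω => ENNReal.ofReal_le_ofReal (le_of_lt hω)
      have hmark := mul_meas_ge_le_lintegral₀ (μ := P)
        (f := fun ω => ENNReal.ofReal |V ω|)
        (hVm.abs.ennreal_ofReal.aemeasurable) (ENNReal.ofReal (t/2))
      have hlin : ∫⁻ ω, ENNReal.ofReal |V ω| ∂P = ENNReal.ofReal (∫ ω, |V ω| ∂P) :=
        (ofReal_integral_eq_lintegral_ofReal hVi.abs
          (Filter.Eventually.of_forall fun ω => abs_nonneg _)).symm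
      have hVB : ∫ ω, |V ω| ∂P ≤ B := by
        have h1 := hBk k hk.2
        have h2 : ∫ ω, |W n ω - W k ω| ∂P = ∫ ω, |V ω| ∂P :=
          integral_congr_ae (Filter.Eventually.of_forall fun ω =>
            show |W n ω - W k ω| = |V ω| by rw [hVsum ω])
        rw [← h2]; exact h1
      have hchain : ENNReal.ofReal (t/2) * P D ≤ ENNReal.ofReal (t/2) * (1/2) := by
        calc ENNReal.ofReal (t/2) * P D
            ≤ ENNReal.ofReal (t/2) * P {ω | ENNReal.ofReal (t/2) ≤ ENNReal.ofReal |V ω|} :=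
              mul_le_mul_right (measure_mono hsub) _
        _ ≤ ∫⁻ ω, ENNReal.ofReal |V ω| ∂P := hmark
        _ = ENNReal.ofReal (∫ ω, |V ω| ∂P) := hlin
        _ ≤ ENNReal.ofReal (t/4) := ENNReal.ofReal_le_ofReal (by linarith)
        _ = ENNReal.ofReal ((t/2) * (1/2)) := by rw [show t/4 = (t/2)*(1/2) by ring]
        _ = ENNReal.ofReal (t/2) * ENNReal.ofReal (1/2) :=
              ENNReal.ofReal_mul (by linarith)
        _ = ENNReal.ofReal (t/2) * (1/2) := by rw [ofReal_half]
      exact (ENNReal.mul_le_mul_iff_right hε0 hεtop).1 hchain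
    -- A k \ D ⊆ A k ∩ E
    have hsubE : A k \ D ⊆ A k ∩ E := by
      rintro ω ⟨hA, hD⟩
      refine ⟨hA, ?_⟩
      simp only [hDdef, Set.mem_setOf_eq, not_lt] at hD
      have h1 : t < |W k ω| := hA.1
      have h2 : |W k ω| ≤ |W n ω| + |V ω| := by
        have h3 : W k ω = W n ω - V ω := by rw [← hVsum ω]; ring
        rw [h3, sub_eq_add_neg]
        exact (abs_add_le _ _).trans (by rw [abs_neg])
      show t < 2 * |W n ω|
      linarith
    have hsplitAD : P (A k ∩ D) + P (A k \ D) = P (A k) := measure_inter_add_diff _ hDmeas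
    have h2P : P (A k) ≤ 1/2 * P (A k) + P (A k ∩ E) := by
      calc P (A k) = P (A k ∩ D) + P (A k \ D) := hsplitAD.symm
      _ ≤ P (A k) * P D + P (A k ∩ E) := by
          rw [hmul]
          exact add_le_add le_rfl (measure_mono hsubE)
      _ ≤ P (A k) * (1/2) + P (A k ∩ E) := add_le_add (mul_le_mul_right hPD _) le_rfl
      _ = 1/2 * P (A k) + P (A k ∩ E) := by rw [mul_comm]
    have hfa : P (A k) ≠ ⊤ := measure_ne_top _ _
    have hfe : P (A k ∩ E) ≠ ⊤ := measure_ne_top _ _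
    have hmne : (1/2 : ℝ≥0∞) * P (A k) ≠ ⊤ := ENNReal.mul_ne_top (by norm_num) hfa
    have h2P' := ENNReal.toReal_mono (ENNReal.add_ne_top.2 ⟨hmne, hfe⟩) h2P
    rw [ENNReal.toReal_add hmne hfe, ENNReal.toReal_mul, toReal_half] at h2P'
    have hreal : (P (A k)).toReal ≤ 2 * (P (A k ∩ E)).toReal := by linarith
    calc P (A k) = ENNReal.ofReal ((P (A k)).toReal) := (ENNReal.ofReal_toReal hfa).symm
    _ ≤ ENNReal.ofReal (2 * (P (A k ∩ E)).toReal) := ENNReal.ofReal_le_ofReal hreal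
    _ = 2 * P (A k ∩ E) := by
        rw [ENNReal.ofReal_mul (by norm_num), ENNReal.ofReal_toReal hfe]
        norm_num
  -- conclude
  calc P {ω | ∃ k, 1 ≤ k ∧ k ≤ n ∧ t < |W k ω|}
      ≤ P (⋃ k ∈ Finset.Icc 1 n, A k) := measure_mono hcover
  _ ≤ ∑ k ∈ Finset.Icc 1 n, P (A k) := measure_biUnion_finset_le _ _
  _ ≤ ∑ k ∈ Finset.Icc 1 n, 2 * P (A k ∩ E) := Finset.sum_le_sum hkey
  _ = 2 * ∑ k ∈ Finset.Icc 1 n, P (A k ∩ E) := (Finset.mul_sum _ _ _).symm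
  _ = 2 * P (⋃ k ∈ Finset.Icc 1 n, (A k ∩ E)) := by
      rw [measure_biUnion_finset (hdisj.mono (fun k => Set.inter_subset_left))
        (fun k _ => (hAmeas k).inter hEmeas)]
  _ ≤ 2 * P E := by
      exact mul_le_mul_right (measure_mono (Set.iUnion₂_subset fun k _ => Set.inter_subset_right)) _
set_option maxHeartbeats 1000000 in
lemma ottaviani_L1
    {Ω : Type*} [MeasurableSpace Ω] (P : Measure Ω) [IsProbabilityMeasure P]
    (Z : ℕ → Ω → ℝ) (hZm : ∀ i, Measurable (Z i))
    (hZi : ∀ i, Integrable (Z i) P)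
    (hind : iIndepFun Z P)
    (n : ℕ) (hn : 1 ≤ n) (B : ℝ) (hB : 0 < B)
    (hBk : ∀ k, k ≤ n →
      ∫ ω, |∑ j ∈ Finset.Icc 1 n, Z j ω - ∑ j ∈ Finset.Icc 1 k, Z j ω| ∂P ≤ B) :
    ∫ ω, (Finset.Icc 1 n).sup' (Finset.nonempty_Icc.mpr hn)
        (fun k => |∑ j ∈ Finset.Icc 1 k, Z j ω|) ∂P ≤ 8 * B := by
  classical
  set W : ℕ → Ω → ℝ := fun k ω => ∑ j ∈ Finset.Icc 1 k, Z j ω with hWdef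
  have hWm : ∀ k, Measurable (W k) := fun k => Finset.measurable_sum _ (fun i _ => hZm i)
  have hWi : ∀ k, Integrable (W k) P := fun k => integrable_finset_sum _ (fun i _ => hZi i)
  set F : Ω → ℝ := fun ω => (Finset.Icc 1 n).sup' (Finset.nonempty_Icc.mpr hn)
      (fun k => |W k ω|) with hFdef
  have hne := Finset.nonempty_Icc.mpr hn
  have hnmem : n ∈ Finset.Icc 1 n := Finset.mem_Icc.2 ⟨hn, le_rfl⟩
  have hF0 : ∀ ω, 0 ≤ F ω := by
    intro ω
    exact le_trans (abs_nonneg (W n ω)) (Finset.le_sup' (fun k => |W k ω|) hnmem)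
  have hFm : Measurable F := by
    have h := Finset.measurable_sup' hne (f := fun k (ω : Ω) => |W k ω|)
      (fun k _ => (hWm k).abs)
    have heq : (Finset.Icc 1 n).sup' hne (fun k (ω : Ω) => |W k ω|) = F := by
      funext ω
      rw [hFdef, Finset.sup'_apply]
    rwa [heq] at h
  have hFi : Integrable F P := by
    refine Integrable.mono' (g := fun ω => ∑ k ∈ Finset.Icc 1 n, |W k ω|)
      (integrable_finset_sum _ fun k _ => (hWi k).abs) hFm.aestronglyMeasurable
      (Filter.Eventually.of_forall fun ω => ?_)
    rw [Real.norm_eq_abs, abs_of_nonneg (hF0 ω)]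
    exact Finset.sup'_le _ _ fun k hk =>
      Finset.single_le_sum (f := fun k => |W k ω|) (fun i _ => abs_nonneg _) hk
  -- tail bound
  have htail : ∀ t : ℝ, 4 * B ≤ t →
      P {ω | t < F ω} ≤ 2 * P {ω | t < 2 * |W n ω|} := by
    intro t ht
    have hset : {ω | t < F ω} = {ω | ∃ k, 1 ≤ k ∧ k ≤ n ∧ t < |W k ω|} := by
      ext ω
      simp only [Set.mem_setOf_eq, hFdef, Finset.lt_sup'_iff, Finset.mem_Icc]
      constructor
      · rintro ⟨k, ⟨h1, h2⟩, h3⟩; exact ⟨k, h1, h2, h3⟩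
      · rintro ⟨k, h1, h2, h3⟩; exact ⟨k, ⟨h1, h2⟩, h3⟩
    rw [hset]
    exact ottaviani_tail P Z hZm hZi hind n B t hB hBk ht
  -- layer cake
  have hlc : ∫⁻ ω, ENNReal.ofReal (F ω) ∂P = ∫⁻ t in Set.Ioi (0:ℝ), P {ω | t < F ω} := by
    exact lintegral_eq_lintegral_meas_lt P (Filter.Eventually.of_forall hF0) hFm.aemeasurable
  have hG0 : ∀ ω, 0 ≤ 2 * |W n ω| := fun ω => by positivity
  have hlcG : ∫⁻ ω, ENNReal.ofReal (2 * |W n ω|) ∂P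
      = ∫⁻ t in Set.Ioi (0:ℝ), P {ω | t < 2 * |W n ω|} :=
    lintegral_eq_lintegral_meas_lt P (Filter.Eventually.of_forall hG0)
      ((hWm n).abs.const_mul 2).aemeasurable
  have hGint : Integrable (fun ω => 2 * |W n ω|) P := (hWi n).abs.const_mul 2
  have hGval : ∫ ω, 2 * |W n ω| ∂P ≤ 2 * B := by
    rw [integral_const_mul]
    have h0 := hBk 0 (Nat.zero_le n)
    have : ∫ ω, |W n ω| ∂P ≤ B := by
      have heq : ∀ ω, |W n ω - ∑ j ∈ Finset.Icc 1 0, Z j ω| = |W n ω| := by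
        intro ω; simp
      calc ∫ ω, |W n ω| ∂P = ∫ ω, |W n ω - ∑ j ∈ Finset.Icc 1 0, Z j ω| ∂P :=
            integral_congr_ae (Filter.Eventually.of_forall fun ω => (heq ω).symm)
      _ ≤ B := h0
    linarith
  have hGlint : ∫⁻ ω, ENNReal.ofReal (2 * |W n ω|) ∂P ≤ ENNReal.ofReal (2 * B) := by
    rw [← ofReal_integral_eq_lintegral_ofReal hGint (Filter.Eventually.of_forall hG0)]
    exact ENNReal.ofReal_le_ofReal hGval
  -- split the t-integral
  have hsplitIoi : Set.Ioi (0:ℝ) = Set.Ioc 0 (4*B) ∪ Set.Ioi (4*B) :=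
    (Set.Ioc_union_Ioi_eq_Ioi (by linarith)).symm
  have hkey : ∫⁻ t in Set.Ioi (0:ℝ), P {ω | t < F ω} ≤ ENNReal.ofReal (8 * B) := by
    rw [hsplitIoi, lintegral_union measurableSet_Ioi (Set.Ioc_disjoint_Ioi le_rfl)]
    have h1 : ∫⁻ t in Set.Ioc (0:ℝ) (4*B), P {ω | t < F ω} ≤ ENNReal.ofReal (4*B) := by
      calc ∫⁻ t in Set.Ioc (0:ℝ) (4*B), P {ω | t < F ω}
          ≤ ∫⁻ _ in Set.Ioc (0:ℝ) (4*B), 1 :=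
            setLIntegral_mono measurable_const (fun t _ => prob_le_one)
      _ = volume (Set.Ioc (0:ℝ) (4*B)) := setLIntegral_one _
      _ = ENNReal.ofReal (4*B) := by rw [Real.volume_Ioc, sub_zero]
    have h2 : ∫⁻ t in Set.Ioi (4*B), P {ω | t < F ω} ≤ ENNReal.ofReal (4*B) := by
      have hmono : ∀ t ∈ Set.Ioi (4*B), P {ω | t < F ω} ≤ 2 * P {ω | t < 2 * |W n ω|} :=
        fun t ht => htail t (le_of_lt ht)
      have hmeas2 : Measurable (fun t : ℝ => 2 * P {ω | t < 2 * |W n ω|}) := by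
        have hant : Antitone (fun t : ℝ => P {ω | t < 2 * |W n ω|}) := by
          intro t₁ t₂ h12
          exact measure_mono (fun ω hω => lt_of_le_of_lt h12 hω)
        exact (hant.measurable).const_mul 2
      calc ∫⁻ t in Set.Ioi (4*B), P {ω | t < F ω}
          ≤ ∫⁻ t in Set.Ioi (4*B), 2 * P {ω | t < 2 * |W n ω|} :=
            setLIntegral_mono hmeas2 hmono
      _ ≤ ∫⁻ t in Set.Ioi (0:ℝ), 2 * P {ω | t < 2 * |W n ω|} :=
            lintegral_mono_set (Set.Ioi_subset_Ioi (by linarith))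
      _ = 2 * ∫⁻ t in Set.Ioi (0:ℝ), P {ω | t < 2 * |W n ω|} :=
            lintegral_const_mul' _ _ (by norm_num)
      _ = 2 * ∫⁻ ω, ENNReal.ofReal (2 * |W n ω|) ∂P := by rw [hlcG]
      _ ≤ 2 * ENNReal.ofReal (2 * B) := mul_le_mul_right hGlint _
      _ = ENNReal.ofReal (4*B) := by
            rw [show (2:ℝ≥0∞) = ENNReal.ofReal 2 by rw [ENNReal.ofReal_ofNat],
              ← ENNReal.ofReal_mul (by norm_num)]
            congr 1; ring
    calc _ ≤ ENNReal.ofReal (4*B) + ENNReal.ofReal (4*B) := add_le_add h1 h2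
    _ = ENNReal.ofReal (8 * B) := by
        rw [← ENNReal.ofReal_add (by linarith) (by linarith)]
        congr 1; ring
  -- conclude
  have hFeq : ∫ ω, F ω ∂P = (∫⁻ ω, ENNReal.ofReal (F ω) ∂P).toReal :=
    integral_eq_lintegral_of_nonneg_ae (Filter.Eventually.of_forall hF0)
      hFm.aestronglyMeasurable
  rw [show (fun ω => (Finset.Icc 1 n).sup' (Finset.nonempty_Icc.mpr hn)
      (fun k => |∑ j ∈ Finset.Icc 1 k, Z j ω|)) = F from rfl] at *
  rw [hFeq]
  have := hlc ▸ hkey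
  calc (∫⁻ ω, ENNReal.ofReal (F ω) ∂P).toReal
      ≤ (ENNReal.ofReal (8 * B)).toReal := ENNReal.toReal_mono ENNReal.ofReal_ne_top this
  _ = 8 * B := ENNReal.toReal_ofReal (by linarith)

set_option maxHeartbeats 1000000

/-- **Lemma 3 (full).** Under the growth condition on `(d n)` and the moment bound
`E|(S n - μ n)/d n| ≤ C₀ exp(γ' (log n)^{1-ε})`, there is `C > 0` with
`E[(1/d n) max_{1 ≤ k ≤ n} |∑_{j=1}^k log((n+1)/j)(Y j - μ)|] ≤ C log n · exp(γ' (log n)^{1-ε})`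
for all `n ≥ 1`. -/
theorem stmt3
    {Ω : Type*} [MeasurableSpace Ω] (P : Measure Ω) [IsProbabilityMeasure P]
    (Y : ℕ → Ω → ℝ) (hYmeas : ∀ n, Measurable (Y n)) (hYint : ∀ n, Integrable (Y n) P)
    (hindep : iIndepFun Y P)
    (μ : ℝ) (S : ℕ → Ω → ℝ) (hS : ∀ n ω, S n ω = ∑ k ∈ Finset.Icc 1 n, Y k ω)
    (d : ℕ → ℝ) (hd : ∀ n, 0 < d n)
    (c γ : ℝ) (hc : 0 < c) (hγ : 0 < γ) (n₀ : ℕ) (hn₀ : 1 ≤ n₀)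
    (hratio : ∀ k l : ℕ, n₀ ≤ k → k ≤ l → c * ((l : ℝ) / (k : ℝ)) ^ γ ≤ d l / d k)
    (C₀ γ' ε : ℝ) (hC₀ : 0 < C₀) (hγ' : γ' ∈ Set.Ioo 0 γ) (hε : ε ∈ Set.Ioo (0 : ℝ) 1)
    (hmom : ∀ n : ℕ, 1 ≤ n →
      ∫ ω, |(S n ω - μ * n) / d n| ∂P ≤ C₀ * Real.exp (γ' * clog n ^ (1 - ε))) :
    ∃ C : ℝ, 0 < C ∧ ∀ (n : ℕ) (hn : 1 ≤ n),
      ∫ ω, (1 / d n) * ((Finset.Icc 1 n).sup' (Finset.nonempty_Icc.mpr hn)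
          fun k => |∑ j ∈ Finset.Icc 1 k, clog (((n : ℝ) + 1) / j) * (Y j ω - μ)|) ∂P
        ≤ C * clog n * Real.exp (γ' * clog n ^ (1 - ε)) := by
  classical
  obtain ⟨hγ'0, hγ'γ⟩ := hγ'
  obtain ⟨hε0, hε1⟩ := hε
  -- the uniform ratio constant M
  have hn₀ne : (Finset.Icc 1 n₀).Nonempty := Finset.nonempty_Icc.mpr hn₀
  have hn₀mem : n₀ ∈ Finset.Icc 1 n₀ := Finset.mem_Icc.2 ⟨hn₀, le_rfl⟩
  set A0 : ℝ := (Finset.Icc 1 n₀).sup' hn₀ne d with hA0def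
  set B0 : ℝ := (Finset.Icc 1 n₀).inf' hn₀ne d with hB0def
  have hB0pos : 0 < B0 := by
    rw [hB0def, Finset.lt_inf'_iff]
    exact fun i _ => hd i
  have hB0A0 : B0 ≤ A0 :=
    le_trans (Finset.inf'_le d hn₀mem) (Finset.le_sup' d hn₀mem)
  have hA0pos : 0 < A0 := lt_of_lt_of_le hB0pos hB0A0
  have hminpos : 0 < min c 1 := lt_min hc one_pos
  set M : ℝ := A0 / (B0 * min c 1) with hMdef
  have hMpos : 0 < M := div_pos hA0pos (mul_pos hB0pos hminpos)
  -- the key uniform comparison d j ≤ M * d m for 1 ≤ j ≤ m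
  have hdM : ∀ j m : ℕ, 1 ≤ j → j ≤ m → d j ≤ M * d m := by
    intro j m hj hjm
    rw [hMdef, div_mul_eq_mul_div, le_div_iff₀ (mul_pos hB0pos hminpos)]
    have hdj := hd j
    have hdm := hd m
    have hmin1 : min c 1 ≤ 1 := min_le_right c 1
    have hminc : min c 1 ≤ c := min_le_left c 1
    rcases le_or_gt m n₀ with hm | hm
    · have h1 : d j ≤ A0 := Finset.le_sup' d (Finset.mem_Icc.2 ⟨hj, le_trans hjm hm⟩)
      have h2 : B0 ≤ d m := Finset.inf'_le d (Finset.mem_Icc.2 ⟨le_trans hj hjm, hm⟩)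
      calc d j * (B0 * min c 1) ≤ A0 * (B0 * min c 1) :=
            mul_le_mul_of_nonneg_right h1 (le_of_lt (mul_pos hB0pos hminpos))
      _ ≤ A0 * (d m * 1) :=
            mul_le_mul_of_nonneg_left
              (mul_le_mul h2 hmin1 (le_of_lt hminpos) (le_of_lt hdm)) (le_of_lt hA0pos)
      _ = A0 * d m := by ring
    · have hrge1 : ∀ p q : ℕ, 1 ≤ p → p ≤ q → (1:ℝ) ≤ ((q:ℝ)/(p:ℝ)) ^ γ := by
        intro p q hp hpq
        have hp' : (0:ℝ) < p := by exact_mod_cast hp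
        have h1 : (1:ℝ) ≤ (q:ℝ)/(p:ℝ) := by
          rw [le_div_iff₀ hp', one_mul]
          exact_mod_cast hpq
        calc (1:ℝ) = (1:ℝ) ^ γ := (Real.one_rpow γ).symm
        _ ≤ ((q:ℝ)/(p:ℝ)) ^ γ := Real.rpow_le_rpow zero_le_one h1 (le_of_lt hγ)
      rcases le_or_gt j n₀ with hjn₀ | hjn₀
      · have h1 : d j ≤ A0 := Finset.le_sup' d (Finset.mem_Icc.2 ⟨hj, hjn₀⟩)
        have h2 := hratio n₀ m le_rfl (le_of_lt hm)
        have h3 := hrge1 n₀ m hn₀ (le_of_lt hm)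
        have h4 : B0 ≤ d n₀ := Finset.inf'_le d hn₀mem
        have h5 : c * ((m:ℝ)/(n₀:ℝ)) ^ γ * d n₀ ≤ d m := (le_div_iff₀ (hd n₀)).1 h2
        have h6 : c * B0 ≤ d m := by
          have e1 : c * B0 ≤ c * d n₀ := mul_le_mul_of_nonneg_left h4 (le_of_lt hc)
          have e2 : (0:ℝ) ≤ c * (((m:ℝ)/(n₀:ℝ))^γ - 1) * d n₀ :=
            mul_nonneg (mul_nonneg (le_of_lt hc) (sub_nonneg.2 h3)) (le_of_lt (hd n₀))
          nlinarith
        calc d j * (B0 * min c 1) ≤ A0 * (B0 * min c 1) :=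
              mul_le_mul_of_nonneg_right h1 (le_of_lt (mul_pos hB0pos hminpos))
        _ ≤ A0 * (B0 * c) :=
              mul_le_mul_of_nonneg_left
                (mul_le_mul_of_nonneg_left hminc (le_of_lt hB0pos)) (le_of_lt hA0pos)
        _ = A0 * (c * B0) := by ring
        _ ≤ A0 * d m := mul_le_mul_of_nonneg_left h6 (le_of_lt hA0pos)
      · have h2 := hratio j m (le_of_lt hjn₀) hjm
        have h3 := hrge1 j m hj hjm
        have h5 : c * ((m:ℝ)/(j:ℝ)) ^ γ * d j ≤ d m := (le_div_iff₀ (hd j)).1 h2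
        have h6 : c * d j ≤ d m := by nlinarith
        have h7 : B0 * min c 1 ≤ A0 * c :=
          mul_le_mul hB0A0 hminc (le_of_lt hminpos) (le_of_lt hA0pos)
        calc d j * (B0 * min c 1) ≤ d j * (A0 * c) :=
              mul_le_mul_of_nonneg_left h7 (le_of_lt hdj)
        _ = A0 * (c * d j) := by ring
        _ ≤ A0 * d m := mul_le_mul_of_nonneg_left h6 (le_of_lt hA0pos)
  -- the constant
  refine ⟨32 * M * C₀, by nlinarith [mul_pos hMpos hC₀], ?_⟩
  intro n hn
  set En : ℝ := Real.exp (γ' * clog n ^ (1 - ε)) with hEndef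
  have hEnpos : 0 < En := Real.exp_pos _
  set a : ℕ → ℝ := fun j => clog (((n:ℝ) + 1) / (j:ℝ)) with hadef
  set Z : ℕ → Ω → ℝ := fun j ω => a j * (Y j ω - μ) with hZdef
  set K' : ℝ := M * C₀ * d n * En with hK'def
  have hK'pos : 0 < K' := by
    rw [hK'def]
    exact mul_pos (mul_pos (mul_pos hMpos hC₀) (hd n)) hEnpos
  set T : ℕ → Ω → ℝ := fun j ω => (∑ i ∈ Finset.Icc 1 j, Y i ω) - μ * j with hTdef
  have hZm : ∀ i, Measurable (Z i) := fun i => ((hYmeas i).sub_const μ).const_mul (a i)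
  have hZi : ∀ i, Integrable (Z i) P :=
    fun i => (((hYint i).sub (integrable_const μ)).const_mul (a i))
  have hZind : iIndepFun Z P := by
    have := hindep.comp (g := fun j (x : ℝ) => a j * (x - μ))
      (fun j => (measurable_id.sub_const μ).const_mul (a j))
    exact this
  have hTi : ∀ j, Integrable (T j) P := fun j =>
    (integrable_finset_sum _ (fun i _ => hYint i)).sub (integrable_const _)
  -- a is ≥ 1 and antitone on [1, ∞)
  have ha1 : ∀ j, 1 ≤ a j := fun j => one_le_clog _
  have ha1pos : 0 < a 1 := lt_of_lt_of_le one_pos (ha1 1)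
  have hamono : ∀ j : ℕ, 1 ≤ j → a (j+1) ≤ a j := by
    intro j hj
    apply clog_mono
    have hj' : (0:ℝ) < (j:ℝ) := by exact_mod_cast hj
    apply div_le_div_of_nonneg_left (by positivity) hj'
    push_cast; linarith
  -- moment bound for T
  have hET : ∀ j, 1 ≤ j → j ≤ n → ∫ ω, |T j ω| ∂P ≤ K' := by
    intro j hj hjn
    have h1 := hmom j hj
    have h2 : ∀ ω, |(S j ω - μ * j) / d j| = |T j ω| / d j := by
      intro ω
      rw [hS j ω, abs_div, abs_of_pos (hd j)]
    have h3 : ∫ ω, |(S j ω - μ * j) / d j| ∂P = (∫ ω, |T j ω| ∂P) / d j := by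
      rw [← integral_div]
      exact integral_congr_ae (Filter.Eventually.of_forall h2)
    rw [h3, div_le_iff₀ (hd j)] at h1
    -- exp monotonicity
    have h4 : Real.exp (γ' * clog j ^ (1 - ε)) ≤ En := by
      rw [hEndef]
      apply Real.exp_le_exp.2
      apply mul_le_mul_of_nonneg_left _ (le_of_lt hγ'0)
      apply Real.rpow_le_rpow (le_trans zero_le_one (one_le_clog _))
        (clog_mono (by exact_mod_cast hjn)) (by linarith)
    have h5 : d j ≤ M * d n := hdM j n hj hjn
    have hexpos : 0 < Real.exp (γ' * clog (j:ℝ) ^ (1 - ε)) := Real.exp_pos _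
    have h7 : C₀ * Real.exp (γ' * clog (j:ℝ) ^ (1 - ε)) * d j ≤ C₀ * En * d j :=
      mul_le_mul_of_nonneg_right (mul_le_mul_of_nonneg_left h4 (le_of_lt hC₀))
        (le_of_lt (hd j))
    have h8 : C₀ * En * d j ≤ C₀ * En * (M * d n) :=
      mul_le_mul_of_nonneg_left h5 (le_of_lt (mul_pos hC₀ hEnpos))
    rw [hK'def]
    nlinarith
  -- Abel summation identity
  have hTdiff : ∀ k ω, T (k+1) ω - T k ω = Y (k+1) ω - μ := by
    intro k ω
    rw [hTdef]
    simp only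
    rw [Finset.sum_Icc_succ_top (Nat.le_add_left 1 k)]
    push_cast
    ring
  have hAbel : ∀ k ω, (∑ j ∈ Finset.Icc 1 k, Z j ω)
      = ∑ j ∈ Finset.Icc 1 k, (a j - a (j+1)) * T j ω + a (k+1) * T k ω := by
    intro k ω
    induction k with
    | zero => simp [hTdef]
    | succ k ih =>
      rw [Finset.sum_Icc_succ_top (Nat.le_add_left 1 k),
        Finset.sum_Icc_succ_top (Nat.le_add_left 1 k), ih]
      have h1 : Z (k+1) ω = a (k+1) * (Y (k+1) ω - μ) := rfl
      have h2 := hTdiff k ω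
      rw [h1, ← h2]
      ring
  -- telescoping sum
  have htel : ∀ k : ℕ, ∑ j ∈ Finset.Icc 1 k, (a j - a (j+1)) = a 1 - a (k+1) := by
    intro k
    induction k with
    | zero => simp
    | succ k ih => rw [Finset.sum_Icc_succ_top (Nat.le_add_left 1 k), ih]; ring
  -- L¹ bound for the weighted partial sums
  have hEZ : ∀ k, k ≤ n → ∫ ω, |∑ j ∈ Finset.Icc 1 k, Z j ω| ∂P ≤ K' * a 1 := by
    intro k hkn
    rcases Nat.eq_zero_or_pos k with rfl | hk1
    · rw [show Finset.Icc 1 0 = (∅ : Finset ℕ) from Finset.Icc_eq_empty (by omega)]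
      simp only [Finset.sum_empty, abs_zero, integral_zero]
      exact le_of_lt (mul_pos hK'pos ha1pos)
    · -- pointwise bound then integrate
      set G : Ω → ℝ := fun ω =>
        ∑ j ∈ Finset.Icc 1 k, (a j - a (j+1)) * |T j ω| + a (k+1) * |T k ω| with hGdef
      have hGi : Integrable G P := by
        apply Integrable.add
        · exact integrable_finset_sum _ (fun j _ => ((hTi j).abs.const_mul _))
        · exact (hTi k).abs.const_mul _
      have hpt : ∀ ω, |∑ j ∈ Finset.Icc 1 k, Z j ω| ≤ G ω := by
        intro ω
        rw [hAbel k ω, hGdef]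
        calc |∑ j ∈ Finset.Icc 1 k, (a j - a (j+1)) * T j ω + a (k+1) * T k ω|
            ≤ |∑ j ∈ Finset.Icc 1 k, (a j - a (j+1)) * T j ω| + |a (k+1) * T k ω| :=
              abs_add_le _ _
        _ ≤ ∑ j ∈ Finset.Icc 1 k, |(a j - a (j+1)) * T j ω| + |a (k+1) * T k ω| := by
              gcongr
              exact Finset.abs_sum_le_sum_abs _ _
        _ ≤ ∑ j ∈ Finset.Icc 1 k, (a j - a (j+1)) * |T j ω| + a (k+1) * |T k ω| := by
              apply add_le_add
              · apply Finset.sum_le_sum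
                intro j hj
                rw [abs_mul, abs_of_nonneg (sub_nonneg.2 (hamono j (Finset.mem_Icc.1 hj).1))]
              · rw [abs_mul, abs_of_nonneg (le_trans zero_le_one (ha1 (k+1)))]
      have hZsumInt : Integrable (fun ω => ∑ j ∈ Finset.Icc 1 k, Z j ω) P :=
        integrable_finset_sum _ (fun j _ => hZi j)
      calc ∫ ω, |∑ j ∈ Finset.Icc 1 k, Z j ω| ∂P ≤ ∫ ω, G ω ∂P :=
            integral_mono hZsumInt.abs hGi hpt
      _ = ∑ j ∈ Finset.Icc 1 k, (a j - a (j+1)) * ∫ ω, |T j ω| ∂P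
            + a (k+1) * ∫ ω, |T k ω| ∂P := by
            rw [hGdef]
            rw [integral_add (integrable_finset_sum _ (fun j _ => ((hTi j).abs.const_mul _)))
              ((hTi k).abs.const_mul _), integral_finset_sum _ (fun j _ => ((hTi j).abs.const_mul _))]
            simp_rw [integral_const_mul]
      _ ≤ ∑ j ∈ Finset.Icc 1 k, (a j - a (j+1)) * K' + a (k+1) * K' := by
            gcongr with j hj
            · exact sub_nonneg.2 (hamono j (Finset.mem_Icc.1 hj).1)
            · exact hET j (Finset.mem_Icc.1 hj).1 (le_trans (Finset.mem_Icc.1 hj).2 hkn)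
            · exact le_trans zero_le_one (ha1 (k+1))
            · exact hET k hk1 hkn
      _ = K' * a 1 := by
            rw [← Finset.sum_mul, htel k]
            ring
  -- apply the maximal inequality
  set B : ℝ := 2 * (K' * a 1) with hBdef
  have hBpos : 0 < B := by
    rw [hBdef]
    exact mul_pos two_pos (mul_pos hK'pos ha1pos)
  have hBk : ∀ k, k ≤ n →
      ∫ ω, |∑ j ∈ Finset.Icc 1 n, Z j ω - ∑ j ∈ Finset.Icc 1 k, Z j ω| ∂P ≤ B := by
    intro k hkn
    have h1 : ∀ ω, |∑ j ∈ Finset.Icc 1 n, Z j ω - ∑ j ∈ Finset.Icc 1 k, Z j ω|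
        ≤ |∑ j ∈ Finset.Icc 1 n, Z j ω| + |∑ j ∈ Finset.Icc 1 k, Z j ω| := by
      intro ω
      rw [sub_eq_add_neg]
      exact (abs_add_le _ _).trans (by rw [abs_neg])
    have hIn : Integrable (fun ω => ∑ j ∈ Finset.Icc 1 n, Z j ω) P :=
      integrable_finset_sum _ (fun j _ => hZi j)
    have hIk : Integrable (fun ω => ∑ j ∈ Finset.Icc 1 k, Z j ω) P :=
      integrable_finset_sum _ (fun j _ => hZi j)
    calc ∫ ω, |∑ j ∈ Finset.Icc 1 n, Z j ω - ∑ j ∈ Finset.Icc 1 k, Z j ω| ∂P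
        ≤ ∫ ω, (|∑ j ∈ Finset.Icc 1 n, Z j ω| + |∑ j ∈ Finset.Icc 1 k, Z j ω|) ∂P :=
          integral_mono (hIn.sub hIk).abs (hIn.abs.add hIk.abs) h1
    _ = ∫ ω, |∑ j ∈ Finset.Icc 1 n, Z j ω| ∂P + ∫ ω, |∑ j ∈ Finset.Icc 1 k, Z j ω| ∂P :=
          integral_add hIn.abs hIk.abs
    _ ≤ K' * a 1 + K' * a 1 := add_le_add (hEZ n le_rfl) (hEZ k hkn)
    _ = B := by rw [hBdef]; ring
  have hmax := ottaviani_L1 P Z hZm hZi hZind n hn B hBpos hBk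
  -- conclude
  have hgoal : ∫ ω, (1 / d n) * ((Finset.Icc 1 n).sup' (Finset.nonempty_Icc.mpr hn)
      fun k => |∑ j ∈ Finset.Icc 1 k, Z j ω|) ∂P
      ≤ 32 * M * C₀ * clog n * En := by
    rw [integral_const_mul]
    have hdninv : (0:ℝ) ≤ 1 / d n := div_nonneg zero_le_one (le_of_lt (hd n))
    have h8 : (1 / d n) * ∫ ω, ((Finset.Icc 1 n).sup' (Finset.nonempty_Icc.mpr hn)
        fun k => |∑ j ∈ Finset.Icc 1 k, Z j ω|) ∂P ≤ (1 / d n) * (8 * B) :=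
      mul_le_mul_of_nonneg_left hmax hdninv
    apply le_trans h8
    have ha1le : a 1 ≤ 2 * clog n := by
      have h9 : a 1 = clog ((n:ℝ) + 1) := by rw [hadef]; norm_num
      rw [h9]
      exact clog_nat_succ_le n hn
    rw [hBdef, hK'def, div_mul_eq_mul_div, div_le_iff₀ (hd n)]
    have h16 : (0:ℝ) ≤ 16 * (M * C₀ * d n * En) := by
      nlinarith [mul_pos (mul_pos (mul_pos hMpos hC₀) (hd n)) hEnpos]
    have hstep := mul_le_mul_of_nonneg_left ha1le h16
    nlinarith [hstep]
  exact hgoal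
end

section
/- Let (Y_n)_{n≥1} be a sequence of independent integrable real-valued random variables, μ ∈ ℝ, S_j = Y_1 + ⋯ + Y_j, and for t ∈ [0,1] set s_n(t) = Σ_{k=1}^{⌊nt⌋} (S_k/k − μ). Suppose (d_n) is a sequence of positive numbers such that there exist constants c > 0, γ > 0 and n₀ ≥ 1 with d_l/d_k ≥ c·(l/k)^γ for all l ≥ k ≥ n₀, and there exist constants C₀ > 0, γ' ∈ (0, γ) and ε ∈ (0,1) with E| (S_n − μn)/d_n | ≤ C₀·exp(γ'(log n)^{1−ε}) for all n ≥ 1. Fix t ∈ [0,1] and a bounded Lipschitz function g : ℝ → ℝ, and set ξ_k = g(s_k(t)/d_k) − E[g(s_k(t)/d_k)]. Then there is a constant C > 0 (depending on g and the above constants) such that for all integers l ≥ k ≥ n₀, |E[ξ_k·ξ_l]| ≤ C·(k/l)^γ·(log l)·(log k)·exp(γ'(log k)^{1−ε}). -/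
open MeasureTheory ProbabilityTheory Filter
open scoped ENNReal NNReal

lemma log_le_clog {x : ℝ} (hx : 0 ≤ x) : Real.log x ≤ clog x := by
  rcases eq_or_lt_of_le hx with h | h
  · simp [← h]
    exact le_trans zero_le_one (one_le_clog 0)
  · exact Real.log_le_log h (le_max_left _ _)

lemma harmonic_le_log (n : ℕ) : ∑ j ∈ Finset.Icc 1 n, (1:ℝ)/j ≤ 1 + Real.log n := by
  induction n with
  | zero => simp
  | succ n ih =>
    rcases Nat.eq_zero_or_pos n with rfl | hn
    · simp
    have hstep : (1:ℝ)/(n+1) + Real.log n ≤ Real.log (n+1) := by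
      have h1 : Real.log ((n:ℝ)/(n+1)) ≤ (n:ℝ)/(n+1) - 1 :=
        Real.log_le_sub_one_of_pos (by positivity)
      have h2 : Real.log ((n:ℝ)/(n+1)) = Real.log n - Real.log (n+1) :=
        Real.log_div (by positivity) (by positivity)
      have h3 : (n:ℝ)/(n+1) - 1 = -(1/(n+1)) := by field_simp; ring
      linarith
    rw [Finset.sum_Icc_succ_top (by omega)]
    push_cast
    linarith

lemma harmonic_le_clog (n : ℕ) : ∑ j ∈ Finset.Icc 1 n, (1:ℝ)/j ≤ 2 * clog n := by
  have h1 := harmonic_le_log n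
  have h2 := log_le_clog (x := (n:ℝ)) (Nat.cast_nonneg n)
  have h3 := one_le_clog (n:ℝ)
  linarith


lemma exists_A (d : ℕ → ℝ) (hd : ∀ n, 0 < d n) (c γ : ℝ) (hc : 0 < c) (hγ : 0 < γ)
    (n₀ : ℕ) (hn₀ : 1 ≤ n₀)
    (hratio : ∀ k l : ℕ, n₀ ≤ k → k ≤ l → c * ((l : ℝ) / (k : ℝ)) ^ γ ≤ d l / d k) :
    ∃ A : ℝ, 0 < A ∧ ∀ kk, n₀ ≤ kk → ∀ j, 1 ≤ j → j ≤ kk → d j ≤ A * d kk := by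
  set T : ℝ := ∑ j ∈ Finset.Icc 1 n₀, d j / d n₀ with hT
  have hsum0 : 0 ≤ T := Finset.sum_nonneg fun j _ => le_of_lt (div_pos (hd j) (hd n₀))
  refine ⟨(T + 1)/c, div_pos (by linarith) hc, ?_⟩
  intro kk hkk j hj1 hjkk
  have hbase : ∀ i : ℕ, n₀ ≤ i → i ≤ kk → c * d i ≤ d kk := by
    intro i hi hikk
    have hi0 : (0:ℝ) < i := by exact_mod_cast (by omega : 0 < i)
    have h1 : (1:ℝ) ≤ ((kk:ℝ)/i)^γ := by
      apply Real.one_le_rpow _ hγ.le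
      rw [le_div_iff₀ hi0]
      exact_mod_cast by simpa using hikk
    have hr := hratio i kk hi hikk
    have h2 : c ≤ d kk / d i := le_trans (by nlinarith) hr
    rw [le_div_iff₀ (hd i)] at h2
    linarith
  rcases le_or_gt n₀ j with h | h
  · have h2 := hbase j h hjkk
    calc d j ≤ (1/c) * d kk := by rw [div_mul_eq_mul_div, le_div_iff₀ hc]; linarith
    _ ≤ ((T + 1)/c) * d kk := by
      apply mul_le_mul_of_nonneg_right _ (hd kk).le
      gcongr
      linarith
  · have h2 := hbase n₀ le_rfl hkk
    have h3 : d j / d n₀ ≤ T := by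
      apply Finset.single_le_sum (f := fun i => d i / d n₀)
        (fun i _ => le_of_lt (div_pos (hd i) (hd n₀)))
      rw [Finset.mem_Icc]; omega
    rw [div_le_iff₀ (hd n₀)] at h3
    have h5 : c * (T * d n₀) ≤ T * d kk := by nlinarith
    rw [div_mul_eq_mul_div, le_div_iff₀ hc]
    nlinarith [hd kk]

lemma ratio_inv (d : ℕ → ℝ) (hd : ∀ n, 0 < d n) (c γ : ℝ) (hc : 0 < c) (hγ : 0 < γ)
    (n₀ : ℕ)
    (hratio : ∀ k l : ℕ, n₀ ≤ k → k ≤ l → c * ((l : ℝ) / (k : ℝ)) ^ γ ≤ d l / d k)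
    (hn₀ : 1 ≤ n₀) :
    ∀ kk ll : ℕ, n₀ ≤ kk → kk ≤ ll → d kk / d ll ≤ (1/c) * ((kk:ℝ)/ll) ^ γ := by
  intro kk ll hkk hkl
  have hr := hratio kk ll hkk hkl
  have hkk0 : (0:ℝ) < kk := by exact_mod_cast (by omega : 0 < kk)
  have hll0 : (0:ℝ) < ll := by
    exact_mod_cast (by omega : 0 < ll)
  have hx0 : (0:ℝ) < (kk:ℝ)/ll := by positivity
  have hinv : ((ll:ℝ)/kk) = ((kk:ℝ)/ll)⁻¹ := by rw [inv_div]
  rw [hinv, Real.inv_rpow hx0.le] at hr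
  have hrp : (0:ℝ) < ((kk:ℝ)/ll)^γ := Real.rpow_pos_of_pos hx0 γ
  have hpos : (0:ℝ) < c * (((kk:ℝ)/ll)^γ)⁻¹ := by positivity
  have h1 : d kk / d ll ≤ (c * (((kk:ℝ)/ll)^γ)⁻¹)⁻¹ := by
    rw [show d kk / d ll = (d ll / d kk)⁻¹ by rw [inv_div]]
    exact inv_anti₀ hpos hr
  calc d kk / d ll ≤ (c * (((kk:ℝ)/ll)^γ)⁻¹)⁻¹ := h1
  _ = (1/c) * ((kk:ℝ)/ll)^γ := by field_simp

/-- **Covariance estimate.** With `ξ k = g(s k (t)/d k) - E[g(s k (t)/d k)]` for a bounded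
Lipschitz `g`, under the growth and moment conditions there is `C > 0` such that for
`l ≥ k ≥ n₀`: `|E[ξ k ξ l]| ≤ C (k/l)^γ (log l)(log k) exp(γ' (log k)^{1-ε})`. -/
theorem stmt7
    {Ω : Type*} [MeasurableSpace Ω] (P : Measure Ω) [IsProbabilityMeasure P]
    (Y : ℕ → Ω → ℝ) (hYmeas : ∀ n, Measurable (Y n)) (hYint : ∀ n, Integrable (Y n) P)
    (hindep : iIndepFun Y P)
    (μ : ℝ) (S : ℕ → Ω → ℝ) (hS : ∀ n ω, S n ω = ∑ i ∈ Finset.Icc 1 n, Y i ω)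
    (t : ℝ) (ht : t ∈ Set.Icc (0 : ℝ) 1)
    (s : ℕ → Ω → ℝ)
    (hs : ∀ n ω, s n ω = ∑ i ∈ Finset.Icc 1 ⌊(n : ℝ) * t⌋₊, (S i ω / i - μ))
    (d : ℕ → ℝ) (hd : ∀ n, 0 < d n)
    (c γ : ℝ) (hc : 0 < c) (hγ : 0 < γ) (n₀ : ℕ) (hn₀ : 1 ≤ n₀)
    (hratio : ∀ k l : ℕ, n₀ ≤ k → k ≤ l → c * ((l : ℝ) / (k : ℝ)) ^ γ ≤ d l / d k)
    (C₀ γ' ε : ℝ) (hC₀ : 0 < C₀) (hγ' : γ' ∈ Set.Ioo 0 γ) (hε : ε ∈ Set.Ioo (0 : ℝ) 1)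
    (hmom : ∀ n : ℕ, 1 ≤ n →
      ∫ ω, |(S n ω - μ * n) / d n| ∂P ≤ C₀ * Real.exp (γ' * clog n ^ (1 - ε)))
    (g : ℝ → ℝ) (hgB : ∃ B : ℝ, ∀ x, |g x| ≤ B)
    (hgL : ∃ K : ℝ, ∀ x y, |g x - g y| ≤ K * |x - y|) :
    ∃ C : ℝ, 0 < C ∧ ∀ k l : ℕ, n₀ ≤ k → k ≤ l →
      |∫ ω, (g (s k ω / d k) - ∫ ω', g (s k ω' / d k) ∂P)
            * (g (s l ω / d l) - ∫ ω', g (s l ω' / d l) ∂P) ∂P|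
        ≤ C * ((k : ℝ) / (l : ℝ)) ^ γ * clog l * clog k
            * Real.exp (γ' * clog k ^ (1 - ε)) := by
  obtain ⟨B, hB⟩ := hgB
  obtain ⟨K, hK⟩ := hgL
  obtain ⟨ht0, ht1⟩ := ht
  obtain ⟨hγ'0, hγ'γ⟩ := hγ'
  obtain ⟨hε0, hε1⟩ := hε
  have hB0 : 0 ≤ B := le_trans (abs_nonneg _) (hB 0)
  have hK0 : 0 ≤ K := by
    have h := hK 1 0
    have h2 := abs_nonneg (g 1 - g 0)
    simp at h; linarith
  have hgc : Continuous g := by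
    have : LipschitzWith ⟨K, hK0⟩ g :=
      LipschitzWith.of_dist_le_mul (fun x y => by rw [Real.dist_eq, Real.dist_eq]; exact hK x y)
    exact this.continuous
  have hSmeas : ∀ n, Measurable (S n) := by
    intro n
    have h : S n = fun ω => ∑ i ∈ Finset.Icc 1 n, Y i ω := funext (hS n)
    rw [h]; exact Finset.measurable_sum _ fun i _ => hYmeas i
  have hSint : ∀ n, Integrable (S n) P := by
    intro n
    have h : S n = fun ω => ∑ i ∈ Finset.Icc 1 n, Y i ω := funext (hS n)
    rw [h]; exact integrable_finset_sum _ fun i _ => hYint i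
  have hsmeas : ∀ n, Measurable (s n) := by
    intro n
    have h : s n = fun ω => ∑ i ∈ Finset.Icc 1 ⌊(n:ℝ)*t⌋₊, (S i ω / i - μ) := funext (hs n)
    rw [h]
    exact Finset.measurable_sum _ fun i _ => ((hSmeas i).div_const _).sub measurable_const
  have hsint : ∀ n, Integrable (s n) P := by
    intro n
    have h : s n = fun ω => ∑ i ∈ Finset.Icc 1 ⌊(n:ℝ)*t⌋₊, (S i ω / i - μ) := funext (hs n)
    rw [h]
    exact integrable_finset_sum _ fun i _ => ((hSint i).div_const _).sub (integrable_const μ)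
  have hbdd_int : ∀ (f : Ω → ℝ) (M : ℝ), Measurable f → (∀ ω, |f ω| ≤ M) →
      Integrable f P := by
    intro f M hf hM
    exact (integrable_const M).mono' hf.aestronglyMeasurable
      (Eventually.of_forall fun ω => by simpa using hM ω)
  have hmom' : ∀ n : ℕ, 1 ≤ n →
      ∫ ω, |S n ω - μ * n| ∂P ≤ d n * (C₀ * Real.exp (γ' * clog n ^ (1 - ε))) := by
    intro n hn
    have h := hmom n hn
    have heq : (fun ω => |(S n ω - μ * n) / d n|) = fun ω => |S n ω - μ * n| / d n := by
      funext ω; rw [abs_div, abs_of_pos (hd n)]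
    rw [heq, integral_div] at h
    rw [div_le_iff₀ (hd n)] at h
    linarith
  have hexp : ∀ j kk : ℕ, j ≤ kk →
      Real.exp (γ' * clog j ^ (1-ε)) ≤ Real.exp (γ' * clog kk ^ (1-ε)) := by
    intro j kk h
    apply Real.exp_le_exp.mpr
    apply mul_le_mul_of_nonneg_left _ hγ'0.le
    apply Real.rpow_le_rpow (le_trans zero_le_one (one_le_clog _))
      (clog_mono (by exact_mod_cast h)) (by linarith)
  obtain ⟨A, hA0, hAd⟩ := exists_A d hd c γ hc hγ n₀ hn₀ hratio
  have hdiv := ratio_inv d hd c γ hc hγ n₀ hratio hn₀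
  refine ⟨8*(B+1)*(K+1)*A*C₀/c, by positivity, ?_⟩
  intro k l hk hl
  set m := ⌊(k:ℝ)*t⌋₊ with hm
  set ml := ⌊(l:ℝ)*t⌋₊ with hml
  have hmk : m ≤ k := by
    calc m ≤ ⌊(k:ℝ)⌋₊ := Nat.floor_mono (mul_le_of_le_one_right (Nat.cast_nonneg k) ht1)
    _ = k := Nat.floor_natCast k
  have hmll : ml ≤ l := by
    calc ml ≤ ⌊(l:ℝ)⌋₊ := Nat.floor_mono (mul_le_of_le_one_right (Nat.cast_nonneg l) ht1)
    _ = l := Nat.floor_natCast l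
  have hmml : m ≤ ml :=
    Nat.floor_mono (mul_le_mul_of_nonneg_right (by exact_mod_cast hl) ht0)
  have hck1 : (1:ℝ) ≤ clog k := one_le_clog _
  have hcl1 : (1:ℝ) ≤ clog l := one_le_clog _
  have hck0 : (0:ℝ) ≤ clog k := le_trans zero_le_one hck1
  have hcl0 : (0:ℝ) ≤ clog l := le_trans zero_le_one hcl1
  set Ek' := Real.exp (γ' * clog (k:ℝ) ^ (1-ε)) with hEk'def
  have hEk'0 : 0 < Ek' := Real.exp_pos _
  set Ek := ∫ ω', g (s k ω' / d k) ∂P with hEkdef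
  set El := ∫ ω', g (s l ω' / d l) ∂P with hEldef
  set H : ℝ := ∑ j ∈ Finset.Icc (m+1) ml, (1:ℝ)/(j:ℝ) with hHdef
  have hH0 : 0 ≤ H := Finset.sum_nonneg fun j _ => by positivity
  set X : Ω → ℝ := fun ω => (∑ j ∈ Finset.Icc (m+1) ml,
      ((∑ i ∈ Finset.Icc (m+1) j, Y i ω)/(j:ℝ) - μ*((j:ℝ) - (m:ℝ))/(j:ℝ))) / d l with hXdef
  have hXmeas : Measurable X := by
    apply Measurable.div_const
    apply Finset.measurable_sum
    intro j _
    exact ((Finset.measurable_sum _ fun i _ => hYmeas i).div_const _).sub measurable_const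
  have hsk : ∀ ω, s k ω = ∑ j ∈ Finset.Icc 1 m, (S j ω/(j:ℝ) - μ) := fun ω => hs k ω
  have hsl : ∀ ω, s l ω = ∑ j ∈ Finset.Icc 1 ml, (S j ω/(j:ℝ) - μ) := fun ω => hs l ω
  have hIoc : ∀ a b : ℕ, Finset.Icc (a+1) b = Finset.Ioc a b := by
    intro a b; ext x; simp only [Finset.mem_Icc, Finset.mem_Ioc]; omega
  have hIoc0 : ∀ b : ℕ, Finset.Icc 1 b = Finset.Ioc 0 b := by
    intro b; ext x; simp only [Finset.mem_Icc, Finset.mem_Ioc]; omega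
  have hSsplit : ∀ j, m ≤ j → ∀ ω, S j ω = S m ω + ∑ i ∈ Finset.Icc (m+1) j, Y i ω := by
    intro j hj ω
    rw [hS j ω, hS m ω, hIoc m j, hIoc0 j, hIoc0 m]
    exact (Finset.sum_Ioc_consecutive _ (Nat.zero_le m) hj).symm
  have hslk : ∀ ω, s l ω = s k ω + ∑ j ∈ Finset.Icc (m+1) ml, (S j ω/(j:ℝ) - μ) := by
    intro ω
    rw [hsl ω, hsk ω, hIoc m ml, hIoc0 ml, hIoc0 m]
    exact (Finset.sum_Ioc_consecutive _ (Nat.zero_le m) hmml).symm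
  have hkey : ∀ ω, s l ω / d l - X ω = (s k ω + (S m ω - μ*(m:ℝ))*H)/d l := by
    intro ω
    have hterm : ∀ j ∈ Finset.Icc (m+1) ml, S j ω/(j:ℝ) - μ
        = ((∑ i ∈ Finset.Icc (m+1) j, Y i ω)/(j:ℝ) - μ*((j:ℝ) - (m:ℝ))/(j:ℝ))
          + (S m ω - μ*(m:ℝ))*(1/(j:ℝ)) := by
      intro j hj
      rw [Finset.mem_Icc] at hj
      have hj0 : (0:ℝ) < (j:ℝ) := by exact_mod_cast (by omega : 0 < j)
      rw [hSsplit j (by omega) ω]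
      field_simp
      ring
    have hsum : ∑ j ∈ Finset.Icc (m+1) ml, (S j ω/(j:ℝ) - μ)
        = (∑ j ∈ Finset.Icc (m+1) ml,
            ((∑ i ∈ Finset.Icc (m+1) j, Y i ω)/(j:ℝ) - μ*((j:ℝ) - (m:ℝ))/(j:ℝ)))
          + (S m ω - μ*(m:ℝ))*H := by
      rw [Finset.sum_congr rfl hterm, Finset.sum_add_distrib, hHdef, Finset.mul_sum]
    have hXval : d l * X ω = ∑ j ∈ Finset.Icc (m+1) ml,
        ((∑ i ∈ Finset.Icc (m+1) j, Y i ω)/(j:ℝ) - μ*((j:ℝ) - (m:ℝ))/(j:ℝ)) := by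
      rw [hXdef]; exact mul_div_cancel₀ _ (ne_of_gt (hd l))
    have h1 : s l ω = s k ω + d l * X ω + (S m ω - μ*(m:ℝ))*H := by
      rw [hslk ω, hsum, hXval]; ring
    have hdl : d l ≠ 0 := ne_of_gt (hd l)
    have h2 : s l ω / d l - X ω = (s l ω - d l * X ω)/d l := by
      rw [sub_div, mul_div_cancel_left₀ _ hdl]
    rw [h2, h1]
    congr 1
    ring
  -- independence
  have hdisj : Disjoint (Finset.Icc 1 m) (Finset.Icc (m+1) ml) := by
    rw [Finset.disjoint_left]
    intro a h1 h2
    rw [Finset.mem_Icc] at h1 h2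
    omega
  set φ : ((Finset.Icc 1 m : Finset ℕ) → ℝ) → ℝ := fun v =>
    g ((∑ j ∈ Finset.Icc 1 m, ((∑ i ∈ (Finset.Icc 1 m).attach,
      if (i:ℕ) ≤ j then v i else 0)/(j:ℝ) - μ)) / d k) with hφdef
  set ψ : ((Finset.Icc (m+1) ml : Finset ℕ) → ℝ) → ℝ := fun v =>
    g ((∑ j ∈ Finset.Icc (m+1) ml, ((∑ i ∈ (Finset.Icc (m+1) ml).attach,
      if (i:ℕ) ≤ j then v i else 0)/(j:ℝ) - μ*((j:ℝ) - (m:ℝ))/(j:ℝ))) / d l) with hψdef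
  have hifmeas : ∀ (F : Finset ℕ) (j : ℕ), Measurable fun v : ↥F → ℝ =>
      (∑ i ∈ F.attach, if (i:ℕ) ≤ j then v i else 0) := by
    intro F j
    apply Finset.measurable_sum
    intro i _
    by_cases h : (i:ℕ) ≤ j
    · simpa only [if_pos h] using measurable_pi_apply i
    · simp only [if_neg h]; exact measurable_const
  have hφmeas : Measurable φ := by
    apply hgc.measurable.comp
    apply Measurable.div_const
    exact Finset.measurable_sum _ fun j _ => ((hifmeas _ j).div_const _).sub measurable_const
  have hψmeas : Measurable ψ := by
    apply hgc.measurable.comp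
    apply Measurable.div_const
    exact Finset.measurable_sum _ fun j _ => ((hifmeas _ j).div_const _).sub measurable_const
  have hcomp : IndepFun (fun ω => g (s k ω / d k)) (fun ω => g (X ω)) P := by
    have hbase := hindep.indepFun_finset (Finset.Icc 1 m) (Finset.Icc (m+1) ml) hdisj hYmeas
    have h1 := hbase.comp hφmeas hψmeas
    have hsum_eq : ∀ (a b j : ℕ) (ω : Ω), j ≤ b →
        (∑ i ∈ (Finset.Icc a b).attach, if (i:ℕ) ≤ j then Y (i:ℕ) ω else 0)
          = ∑ i ∈ Finset.Icc a j, Y i ω := by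
      intro a b j ω hjb
      rw [Finset.sum_attach (Finset.Icc a b) (fun i => if i ≤ j then Y i ω else 0),
        ← Finset.sum_filter]
      congr 1
      ext x
      simp only [Finset.mem_Icc, Finset.mem_filter]
      omega
    have hφeq : (φ ∘ fun a (i : (Finset.Icc 1 m : Finset ℕ)) => Y i a)
        = fun ω => g (s k ω / d k) := by
      funext ω
      simp only [Function.comp_apply, hφdef]
      rw [hsk ω]
      congr 2
      apply Finset.sum_congr rfl
      intro j hj
      rw [Finset.mem_Icc] at hj
      rw [hsum_eq 1 m j ω hj.2, hS j ω]
    have hψeq : (ψ ∘ fun a (i : (Finset.Icc (m+1) ml : Finset ℕ)) => Y i a)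
        = fun ω => g (X ω) := by
      funext ω
      simp only [Function.comp_apply, hψdef, hXdef]
      congr 2
      apply Finset.sum_congr rfl
      intro j hj
      rw [Finset.mem_Icc] at hj
      rw [hsum_eq (m+1) ml j ω hj.2]
    rw [hφeq, hψeq] at h1
    exact h1
  have hind : IndepFun (fun ω => g (s k ω / d k) - Ek) (fun ω => g (X ω)) P := by
    have h2 := hcomp.comp (φ := fun x : ℝ => x - Ek) (ψ := id)
      (measurable_id.sub measurable_const) measurable_id
    exact h2
  -- integrability
  have hfk_int : Integrable (fun ω => g (s k ω / d k)) P :=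
    hbdd_int _ B (hgc.measurable.comp ((hsmeas k).div_const _)) (fun ω => hB _)
  have hfl_int : Integrable (fun ω => g (s l ω / d l)) P :=
    hbdd_int _ B (hgc.measurable.comp ((hsmeas l).div_const _)) (fun ω => hB _)
  have hgX_int : Integrable (fun ω => g (X ω)) P :=
    hbdd_int _ B (hgc.measurable.comp hXmeas) (fun ω => hB _)
  have hEkb : |Ek| ≤ B := by
    rw [hEkdef]
    calc |∫ ω', g (s k ω' / d k) ∂P| ≤ ∫ ω', |g (s k ω' / d k)| ∂P := by
          simpa only [Real.norm_eq_abs] using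
            norm_integral_le_integral_norm (fun ω' => g (s k ω' / d k)) (μ := P)
    _ ≤ ∫ _ω', B ∂P := integral_mono hfk_int.abs (integrable_const B) (fun ω => hB _)
    _ = B := by simp
  have hElb : |El| ≤ B := by
    rw [hEldef]
    calc |∫ ω', g (s l ω' / d l) ∂P| ≤ ∫ ω', |g (s l ω' / d l)| ∂P := by
          simpa only [Real.norm_eq_abs] using
            norm_integral_le_integral_norm (fun ω' => g (s l ω' / d l)) (μ := P)
    _ ≤ ∫ _ω', B ∂P := integral_mono hfl_int.abs (integrable_const B) (fun ω => hB _)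
    _ = B := by simp
  have hξk_int : Integrable (fun ω => g (s k ω / d k) - Ek) P :=
    hfk_int.sub (integrable_const Ek)
  have hξk_bd : ∀ ω, |g (s k ω / d k) - Ek| ≤ 2*B := by
    intro ω
    have h1 := hB (s k ω / d k)
    calc |g (s k ω/d k) - Ek| ≤ |g (s k ω/d k)| + |Ek| := abs_sub _ _
    _ ≤ 2*B := by linarith
  have hξk0 : ∫ ω, (g (s k ω / d k) - Ek) ∂P = 0 := by
    rw [integral_sub hfk_int (integrable_const Ek), integral_const]
    simp only [probReal_univ, one_smul]
    rw [← hEkdef, sub_self]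
  have hzero : ∫ ω, (g (s k ω / d k) - Ek) * g (X ω) ∂P = 0 := by
    have h := ProbabilityTheory.IndepFun.integral_fun_mul_eq_mul_integral hind hξk_int.aestronglyMeasurable hgX_int.aestronglyMeasurable
    have h2 : ∫ ω, (g (s k ω / d k) - Ek) * g (X ω) ∂P
        = (∫ ω, (g (s k ω / d k) - Ek) ∂P) * ∫ ω, g (X ω) ∂P := h
    rw [h2, hξk0, zero_mul]
  have hprod_int1 : Integrable
      (fun ω => (g (s k ω/d k) - Ek) * (g (s l ω/d l) - g (X ω))) P := by
    apply hbdd_int _ (2*B*(2*B))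
    · exact ((hgc.measurable.comp ((hsmeas k).div_const _)).sub measurable_const).mul
        ((hgc.measurable.comp ((hsmeas l).div_const _)).sub (hgc.measurable.comp hXmeas))
    · intro ω
      rw [abs_mul]
      apply mul_le_mul (hξk_bd ω) _ (abs_nonneg _) (by linarith)
      calc |g (s l ω/d l) - g (X ω)| ≤ |g (s l ω/d l)| + |g (X ω)| := abs_sub _ _
      _ ≤ 2*B := by have := hB (s l ω/d l); have := hB (X ω); linarith
  have hprod_int2 : Integrable (fun ω => (g (s k ω/d k) - Ek) * g (X ω)) P := by
    apply hbdd_int _ (2*B*B)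
    · exact ((hgc.measurable.comp ((hsmeas k).div_const _)).sub measurable_const).mul
        (hgc.measurable.comp hXmeas)
    · intro ω
      rw [abs_mul]
      exact mul_le_mul (hξk_bd ω) (hB _) (abs_nonneg _) (by linarith)
  have hprod_int3 : Integrable (fun ω => El * (g (s k ω/d k) - Ek)) P :=
    hξk_int.const_mul El
  have hstep1 : ∫ ω, (g (s k ω/d k) - Ek) * (g (s l ω/d l) - El) ∂P
      = ∫ ω, (g (s k ω/d k) - Ek) * (g (s l ω/d l) - g (X ω)) ∂P := by
    have heq : (fun ω => (g (s k ω/d k) - Ek) * (g (s l ω/d l) - El))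
        = fun ω => (g (s k ω/d k) - Ek) * (g (s l ω/d l) - g (X ω))
          + ((g (s k ω/d k) - Ek) * g (X ω) - El * (g (s k ω/d k) - Ek)) := by
      funext ω; ring
    have hprod_int23 : Integrable
        (fun ω => (g (s k ω/d k) - Ek) * g (X ω) - El * (g (s k ω/d k) - Ek)) P :=
      hprod_int2.sub hprod_int3
    have hz2 : ∫ ω, ((g (s k ω/d k) - Ek) * g (X ω) - El * (g (s k ω/d k) - Ek)) ∂P
        = 0 := by
      rw [integral_sub hprod_int2 hprod_int3, hzero, integral_const_mul, hξk0]
      ring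
    rw [heq, integral_add hprod_int1 hprod_int23, hz2, add_zero]
  -- pointwise bound
  have hRint : Integrable (fun ω => (|s k ω| + |S m ω - μ*(m:ℝ)| * H)/d l) P :=
    ((hsint k).abs.add (((hSint m).sub (integrable_const _)).abs.mul_const H)).div_const _
  have hIbd : |∫ ω, (g (s k ω/d k) - Ek) * (g (s l ω/d l) - g (X ω)) ∂P|
      ≤ 2*B*K * ∫ ω, (|s k ω| + |S m ω - μ*(m:ℝ)| * H)/d l ∂P := by
    have hpt : ∀ ω, |(g (s k ω/d k) - Ek) * (g (s l ω/d l) - g (X ω))|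
        ≤ 2*B*K * ((|s k ω| + |S m ω - μ*(m:ℝ)| * H)/d l) := by
      intro ω
      rw [abs_mul]
      have h1 : |g (s l ω/d l) - g (X ω)| ≤ K * |s l ω/d l - X ω| := hK _ _
      have h2 : |s l ω/d l - X ω| ≤ (|s k ω| + |S m ω - μ*(m:ℝ)| * H)/d l := by
        rw [hkey ω, abs_div, abs_of_pos (hd l)]
        apply (div_le_div_iff_of_pos_right (hd l)).mpr
        exact (abs_add_le _ _).trans (by rw [abs_mul, abs_of_nonneg hH0])
      calc |g (s k ω/d k) - Ek| * |g (s l ω/d l) - g (X ω)|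
          ≤ (2*B) * (K * |s l ω/d l - X ω|) :=
            mul_le_mul (hξk_bd ω) h1 (abs_nonneg _) (by linarith)
      _ ≤ (2*B) * (K * ((|s k ω| + |S m ω - μ*(m:ℝ)| * H)/d l)) := by
            apply mul_le_mul_of_nonneg_left _ (by linarith)
            exact mul_le_mul_of_nonneg_left h2 hK0
      _ = 2*B*K * ((|s k ω| + |S m ω - μ*(m:ℝ)| * H)/d l) := by ring
    calc |∫ ω, (g (s k ω/d k) - Ek) * (g (s l ω/d l) - g (X ω)) ∂P|
        ≤ ∫ ω, |(g (s k ω/d k) - Ek) * (g (s l ω/d l) - g (X ω))| ∂P := by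
          simpa only [Real.norm_eq_abs] using norm_integral_le_integral_norm
            (fun ω => (g (s k ω/d k) - Ek) * (g (s l ω/d l) - g (X ω))) (μ := P)
    _ ≤ ∫ ω, 2*B*K * ((|s k ω| + |S m ω - μ*(m:ℝ)| * H)/d l) ∂P :=
          integral_mono hprod_int1.abs (hRint.const_mul _) hpt
    _ = 2*B*K * ∫ ω, (|s k ω| + |S m ω - μ*(m:ℝ)| * H)/d l ∂P := integral_const_mul _ _
  have hRval : ∫ ω, (|s k ω| + |S m ω - μ*(m:ℝ)| * H)/d l ∂P
      = ((∫ ω, |s k ω| ∂P) + (∫ ω, |S m ω - μ*(m:ℝ)| ∂P)*H)/d l := by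
    have hSmc_int : Integrable (fun ω => S m ω - μ*(m:ℝ)) P :=
      (hSint m).sub (integrable_const _)
    rw [integral_div, integral_add ((hsint k).abs) (hSmc_int.abs.mul_const H),
      integral_mul_const]
  -- bounds on the pieces
  have hcore : ∀ j, 1 ≤ j → j ≤ k → ∫ ω, |S j ω - μ*(j:ℝ)| ∂P ≤ A * d k * (C₀ * Ek') := by
    intro j hj1 hjk
    calc ∫ ω, |S j ω - μ*(j:ℝ)| ∂P ≤ d j * (C₀ * Real.exp (γ' * clog j ^ (1-ε))) :=
          hmom' j hj1
    _ ≤ (A * d k) * (C₀ * Ek') := by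
        apply mul_le_mul (hAd k hk j hj1 hjk)
          (mul_le_mul_of_nonneg_left (hexp j k hjk) hC₀.le)
          (by positivity) (mul_nonneg hA0.le (hd k).le)
  have hsk_bd : ∫ ω, |s k ω| ∂P ≤ (A * d k * (C₀ * Ek')) * (2 * clog k) := by
    have hjint : ∀ j ∈ Finset.Icc 1 m,
        Integrable (fun ω => |S j ω - μ*(j:ℝ)| * (1/(j:ℝ))) P :=
      fun j _ => ((hSint j).sub (integrable_const _)).abs.mul_const _
    have hpt : ∀ ω, |s k ω| ≤ ∑ j ∈ Finset.Icc 1 m, |S j ω - μ*(j:ℝ)| * (1/(j:ℝ)) := by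
      intro ω
      rw [hsk ω]
      refine le_trans (Finset.abs_sum_le_sum_abs _ _) ?_
      apply Finset.sum_le_sum
      intro j hj
      rw [Finset.mem_Icc] at hj
      have hj0 : (0:ℝ) < (j:ℝ) := by exact_mod_cast (by omega : 0 < j)
      rw [show S j ω / (j:ℝ) - μ = (S j ω - μ*(j:ℝ)) * (1/(j:ℝ)) by
          rw [mul_one_div, sub_div, mul_div_cancel_right₀ _ (ne_of_gt hj0)],
        abs_mul, abs_of_pos (by positivity : (0:ℝ) < 1/(j:ℝ))]
    calc ∫ ω, |s k ω| ∂P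
        ≤ ∫ ω, ∑ j ∈ Finset.Icc 1 m, |S j ω - μ*(j:ℝ)| * (1/(j:ℝ)) ∂P :=
          integral_mono (hsint k).abs (integrable_finset_sum _ hjint) hpt
    _ = ∑ j ∈ Finset.Icc 1 m, ∫ ω, |S j ω - μ*(j:ℝ)| * (1/(j:ℝ)) ∂P :=
          integral_finset_sum _ hjint
    _ = ∑ j ∈ Finset.Icc 1 m, (∫ ω, |S j ω - μ*(j:ℝ)| ∂P) * (1/(j:ℝ)) := by
          apply Finset.sum_congr rfl
          intro j _
          exact integral_mul_const _ _
    _ ≤ ∑ j ∈ Finset.Icc 1 m, (A * d k * (C₀ * Ek')) * (1/(j:ℝ)) := by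
          apply Finset.sum_le_sum
          intro j hj
          rw [Finset.mem_Icc] at hj
          exact mul_le_mul_of_nonneg_right (hcore j hj.1 (hj.2.trans hmk)) (by positivity)
    _ = (A * d k * (C₀ * Ek')) * ∑ j ∈ Finset.Icc 1 m, (1:ℝ)/(j:ℝ) := by
          rw [← Finset.mul_sum]
    _ ≤ (A * d k * (C₀ * Ek')) * (2 * clog k) := by
          apply mul_le_mul_of_nonneg_left _
            (mul_nonneg (mul_nonneg hA0.le (hd k).le) (by positivity))
          calc ∑ j ∈ Finset.Icc 1 m, (1:ℝ)/(j:ℝ)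
              ≤ ∑ j ∈ Finset.Icc 1 k, (1:ℝ)/(j:ℝ) :=
                Finset.sum_le_sum_of_subset_of_nonneg
                  (Finset.Icc_subset_Icc_right hmk) (fun j _ _ => by positivity)
          _ ≤ 2 * clog k := harmonic_le_clog k
  have hSm_bd : ∫ ω, |S m ω - μ*(m:ℝ)| ∂P ≤ A * d k * (C₀ * Ek') := by
    rcases Nat.eq_zero_or_pos m with hm0 | hm1
    · have hz : (fun ω => |S m ω - μ*(m:ℝ)|) = fun _ω => (0:ℝ) := by
        funext ω
        rw [hm0, hS 0 ω]
        simp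
      rw [hz, integral_zero]
      exact mul_nonneg (mul_nonneg hA0.le (hd k).le) (by positivity)
    · exact hcore m hm1 hmk
  have hHbd : H ≤ 2 * clog l := by
    rw [hHdef]
    calc ∑ j ∈ Finset.Icc (m+1) ml, (1:ℝ)/(j:ℝ)
        ≤ ∑ j ∈ Finset.Icc 1 l, (1:ℝ)/(j:ℝ) :=
          Finset.sum_le_sum_of_subset_of_nonneg
            (Finset.Icc_subset_Icc (by omega) hmll) (fun j _ _ => by positivity)
    _ ≤ 2 * clog l := harmonic_le_clog l
  -- final assembly
  have hrp0 : (0:ℝ) ≤ ((k:ℝ)/(l:ℝ))^γ := Real.rpow_nonneg (by positivity) γ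
  have hend : ((∫ ω, |s k ω| ∂P) + (∫ ω, |S m ω - μ*(m:ℝ)| ∂P)*H)/d l
      ≤ (4*A*C₀/c)*(((k:ℝ)/(l:ℝ))^γ*(clog l*(clog k*Ek'))) := by
    have hSm0 : 0 ≤ ∫ ω, |S m ω - μ*(m:ℝ)| ∂P := integral_nonneg fun ω => abs_nonneg _
    have h2 : (∫ ω, |S m ω - μ*(m:ℝ)| ∂P)*H ≤ (A * d k * (C₀ * Ek')) * (2*clog l) :=
      mul_le_mul hSm_bd hHbd hH0 (mul_nonneg (mul_nonneg hA0.le (hd k).le) (by positivity))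
    have h3 : ((∫ ω, |s k ω| ∂P) + (∫ ω, |S m ω - μ*(m:ℝ)| ∂P)*H)/d l
        ≤ ((A * d k * (C₀ * Ek'))*(2*clog k) + (A * d k * (C₀ * Ek'))*(2*clog l))/d l := by
      apply (div_le_div_iff_of_pos_right (hd l)).mpr
      linarith [hsk_bd]
    have h4 : ((A * d k * (C₀ * Ek'))*(2*clog k) + (A * d k * (C₀ * Ek'))*(2*clog l))/d l
        = (A*(C₀*Ek'))*(2*clog k + 2*clog l)*(d k/d l) := by
      ring
    have h5 : 2*clog k + 2*clog l ≤ 4*(clog l*clog k) := by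
      have e1 : clog (k:ℝ) * 1 ≤ clog (k:ℝ) * clog (l:ℝ) := mul_le_mul_of_nonneg_left hcl1 hck0
      have e2 : clog (l:ℝ) * 1 ≤ clog (l:ℝ) * clog (k:ℝ) := mul_le_mul_of_nonneg_left hck1 hcl0
      have e3 : clog (k:ℝ) * clog (l:ℝ) = clog (l:ℝ) * clog (k:ℝ) := mul_comm _ _
      linarith
    have h6 := hdiv k l hk hl
    have hdkl0 : 0 ≤ d k / d l := le_of_lt (div_pos (hd k) (hd l))
    have hpos1 : (0:ℝ) ≤ A*(C₀*Ek') := mul_nonneg hA0.le (by positivity)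
    have hpos2 : (0:ℝ) ≤ (A*(C₀*Ek'))*(4*(clog l*clog k)) :=
      mul_nonneg hpos1 (mul_nonneg (by norm_num) (mul_nonneg hcl0 hck0))
    calc ((∫ ω, |s k ω| ∂P) + (∫ ω, |S m ω - μ*(m:ℝ)| ∂P)*H)/d l
        ≤ ((A * d k * (C₀ * Ek'))*(2*clog k) + (A * d k * (C₀ * Ek'))*(2*clog l))/d l := h3
    _ = (A*(C₀*Ek'))*(2*clog k + 2*clog l)*(d k/d l) := h4
    _ ≤ (A*(C₀*Ek'))*(4*(clog l*clog k))*(d k/d l) :=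
        mul_le_mul_of_nonneg_right (mul_le_mul_of_nonneg_left h5 hpos1) hdkl0
    _ ≤ (A*(C₀*Ek'))*(4*(clog l*clog k))*((1/c)*((k:ℝ)/(l:ℝ))^γ) :=
        mul_le_mul_of_nonneg_left h6 hpos2
    _ = (4*A*C₀/c)*(((k:ℝ)/(l:ℝ))^γ*(clog l*(clog k*Ek'))) := by ring
  have hX0 : (0:ℝ) ≤ ((k:ℝ)/(l:ℝ))^γ*(clog l*(clog k*Ek')) :=
    mul_nonneg hrp0 (mul_nonneg hcl0 (mul_nonneg hck0 hEk'0.le))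
  have hco : 2*B*K*(4*A*C₀/c) ≤ 8*(B+1)*(K+1)*A*C₀/c := by
    have h7 : 8*B*K*A*C₀ ≤ 8*(B+1)*(K+1)*A*C₀ := by
      have hBK : B*K ≤ (B+1)*(K+1) := by
        calc B*K ≤ B*K + (B+K+1) := by linarith
        _ = (B+1)*(K+1) := by ring
      calc 8*B*K*A*C₀ = (B*K)*(8*A*C₀) := by ring
      _ ≤ ((B+1)*(K+1))*(8*A*C₀) := mul_le_mul_of_nonneg_right hBK (by positivity)
      _ = 8*(B+1)*(K+1)*A*C₀ := by ring
    calc 2*B*K*(4*A*C₀/c) = (8*B*K*A*C₀)*(1/c) := by ring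
    _ ≤ (8*(B+1)*(K+1)*A*C₀)*(1/c) := mul_le_mul_of_nonneg_right h7 (by positivity)
    _ = 8*(B+1)*(K+1)*A*C₀/c := by ring
  calc |∫ ω, (g (s k ω / d k) - Ek) * (g (s l ω / d l) - El) ∂P|
      = |∫ ω, (g (s k ω/d k) - Ek) * (g (s l ω/d l) - g (X ω)) ∂P| := by rw [hstep1]
  _ ≤ 2*B*K * ∫ ω, (|s k ω| + |S m ω - μ*(m:ℝ)| * H)/d l ∂P := hIbd
  _ = 2*B*K * (((∫ ω, |s k ω| ∂P) + (∫ ω, |S m ω - μ*(m:ℝ)| ∂P)*H)/d l) := by rw [hRval]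
  _ ≤ 2*B*K * ((4*A*C₀/c)*(((k:ℝ)/(l:ℝ))^γ*(clog l*(clog k*Ek')))) :=
      mul_le_mul_of_nonneg_left hend (by positivity)
  _ = (2*B*K*(4*A*C₀/c)) * (((k:ℝ)/(l:ℝ))^γ*(clog l*(clog k*Ek'))) := by ring
  _ ≤ (8*(B+1)*(K+1)*A*C₀/c) * (((k:ℝ)/(l:ℝ))^γ*(clog l*(clog k*Ek'))) :=
      mul_le_mul_of_nonneg_right hco hX0
  _ = 8*(B+1)*(K+1)*A*C₀/c * ((k:ℝ)/(l:ℝ))^γ * clog l * clog k * Ek' := by ring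
end
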